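/- For the conformal inversion X_i = x_jx^j∂_i - 2x_ix^j∂_j, the difference between the adjoint action 𝓛^{λ,μ}_{X_i} on differential operators (pulled back by normal ordering) and the symbol action L^δ_{X_i} equals -p_i T + 2(E + nλ)∂_{p^i}, where T = η_{ij}∂_{p_i}∂_{p_j}, E = p_i∂_{p_i}, ∂_{p^i} = η_{ij}∂_{p_j}, and δ = μ - λ. -/

import Mathlib

open MvPolynomial

noncomputable section

/-- Polynomial symbols: polynomial functions on `T*ℝⁿ`; `Sum.inl` are the `x` variables,
`Sum.inr` the fiber variables `p`. -/
abbrev PolySym (n : ℕ) := MvPolynomial (Fin n ⊕ Fin n) ℝ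

/-- Polynomial functions on `ℝⁿ` (densities are identified with these). -/
abbrev PolyDen (n : ℕ) := MvPolynomial (Fin n) ℝ

/-- Polynomial vector fields on `ℝⁿ`, given by their components. -/
abbrev PolyVF (n : ℕ) := Fin n → PolyDen n

/-- `∂/∂x^i` on symbols. -/
def dxOp (n : ℕ) (i : Fin n) : Module.End ℝ (PolySym n) := (pderiv (Sum.inl i)).toLinearMap

/-- `∂/∂p_i` on symbols. -/
def dpOp (n : ℕ) (i : Fin n) : Module.End ℝ (PolySym n) := (pderiv (Sum.inr i)).toLinearMap

/-- Multiplication by a symbol. -/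
def mulOp (n : ℕ) (q : PolySym n) : Module.End ℝ (PolySym n) := LinearMap.mulLeft ℝ q

/-- The symbol `x^i`. -/
def xVar (n : ℕ) (i : Fin n) : PolySym n := X (Sum.inl i)

/-- The symbol `p_i`. -/
def pVar (n : ℕ) (i : Fin n) : PolySym n := X (Sum.inr i)

/-- A polynomial in `x` viewed as a symbol. -/
def liftX (n : ℕ) (f : PolyDen n) : PolySym n := rename Sum.inl f

/-- Divergence of a vector field. -/
def divVF (n : ℕ) (Xf : PolyVF n) : PolyDen n := ∑ i, pderiv i (Xf i)

/-- Weight function computing the degree in the `p` variables. -/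
def pwt (n : ℕ) : Fin n ⊕ Fin n → ℕ := Sum.elim (fun _ => 0) (fun _ => 1)

/-- Homogeneity of degree `k` in the fiber variables `p`. -/
def IsPHomog (n : ℕ) (P : PolySym n) (k : ℕ) : Prop := IsWeightedHomogeneous (pwt n) P k

/-- The weight-`δ` action `L^δ_X = X^i ∂_{x^i} - p_j (∂_{x^i} X^j) ∂_{p_i} + δ Div(X)` of a
vector field on symbols. -/
def Lop (n : ℕ) (δ : ℝ) (Xf : PolyVF n) : Module.End ℝ (PolySym n) :=
  (∑ i, mulOp n (liftX n (Xf i)) ∘ₗ dxOp n i)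
    - (∑ i, ∑ j, mulOp n (pVar n j * liftX n (pderiv i (Xf j))) ∘ₗ dpOp n i)
    + δ • mulOp n (liftX n (divVF n Xf))

/-- The action `ℓ^λ_X = X + λ Div(X)` of a vector field on `λ`-densities. -/
def ellOp (n : ℕ) (lam : ℝ) (Xf : PolyVF n) : Module.End ℝ (PolyDen n) :=
  (∑ i, LinearMap.mulLeft ℝ (Xf i) ∘ₗ (pderiv i).toLinearMap)
    + lam • LinearMap.mulLeft ℝ (divVF n Xf)

/-- Lie bracket of polynomial vector fields. -/
def bracketVF (n : ℕ) (Xf Yf : PolyVF n) : PolyVF n :=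
  fun i => ∑ j, (Xf j * pderiv j (Yf i) - Yf j * pderiv j (Xf i))
/-- The trace operator `T = η_{ij} ∂_{p_i} ∂_{p_j}` for the diagonal metric with entries `ε`. -/
def traceOp (n : ℕ) (ε : Fin n → ℝ) : Module.End ℝ (PolySym n) :=
  ∑ i, ε i • (dpOp n i ∘ₗ dpOp n i)

/-- The Euler operator `E = p_i ∂_{p_i}`. -/
def eulerOp (n : ℕ) : Module.End ℝ (PolySym n) := ∑ i, mulOp n (pVar n i) ∘ₗ dpOp n i

/-- The quadratic symbol `R = η^{ij} p_i p_j` (the metric). -/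
def rQuad (n : ℕ) (ε : Fin n → ℝ) : PolySym n := ∑ i, ε i • (pVar n i * pVar n i)

/-- Multiplication by the metric symbol `R`. -/
def rOp (n : ℕ) (ε : Fin n → ℝ) : Module.End ℝ (PolySym n) := mulOp n (rQuad n ε)

/-- The divergence operator `D = ∂_{x^i} ∂_{p_i}` on symbols. -/
def divOp (n : ℕ) : Module.End ℝ (PolySym n) := ∑ i, dxOp n i ∘ₗ dpOp n i

/-- The gradient operator `G = η^{ij} p_i ∂_{x^j}`. -/
def gradOp (n : ℕ) (ε : Fin n → ℝ) : Module.End ℝ (PolySym n) :=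
  ∑ i, ε i • (mulOp n (pVar n i) ∘ₗ dxOp n i)

/-- The translation vector field `∂_i`. -/
def transVF (n : ℕ) (i : Fin n) : PolyVF n := fun j => if j = i then 1 else 0

/-- The dilation vector field `x^i ∂_i`. -/
def dilVF (n : ℕ) : PolyVF n := fun j => X j

/-- The rotation vector field `x_j ∂_i - x_i ∂_j` for the diagonal metric `ε`. -/
def rotVF (n : ℕ) (ε : Fin n → ℝ) (i j : Fin n) : PolyVF n :=
  fun m => (if m = i then ε j • X j else 0) - (if m = j then ε i • X i else 0)

/-- The conformal inversion `X_i = x_j x^j ∂_i - 2 x_i x^j ∂_j`. -/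
def invVF (n : ℕ) (ε : Fin n → ℝ) (i : Fin n) : PolyVF n :=
  fun j => (if j = i then ∑ m, ε m • (X m * X m) else 0) - (2 * ε i) • (X i * X j)

/-- Generators of the conformal Lie algebra: translations, rotations, the dilation and the
conformal inversions. -/
def confGenSet (n : ℕ) (ε : Fin n → ℝ) : Set (PolyVF n) :=
  Set.range (transVF n) ∪ {Xf | ∃ i j, Xf = rotVF n ε i j} ∪ {dilVF n} ∪
    Set.range (invVF n ε)
/-- Exponents of the `x`-part of a symbol monomial. -/
def xExp (n : ℕ) (m : (Fin n ⊕ Fin n) →₀ ℕ) : Fin n →₀ ℕ :=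
  Finsupp.comapDomain Sum.inl m Sum.inl_injective.injOn

/-- Exponents of the `p`-part of a symbol monomial. -/
def pExp (n : ℕ) (m : (Fin n ⊕ Fin n) →₀ ℕ) : Fin n →₀ ℕ :=
  Finsupp.comapDomain Sum.inr m Sum.inr_injective.injOn

/-- The iterated partial derivative `∂^b f` of a polynomial on `ℝⁿ`. -/
def derivMulti (n : ℕ) (b : Fin n →₀ ℕ) (f : PolyDen n) : PolyDen n :=
  ∑ c ∈ f.support, (f.coeff c * ∏ i, (Nat.descFactorial (c i) (b i) : ℝ)) • monomial (c - b) 1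

/-- Normal ordering: the differential operator associated to a symbol, sending the monomial
`x^a p^b` to the operator `x^a ∂^b`. -/
def Nord (n : ℕ) (P : PolySym n) (f : PolyDen n) : PolyDen n :=
  ∑ m ∈ P.support, P.coeff m • (monomial (xExp n m) 1 * derivMulti n (pExp n m) f)

namespace Aux

open Finsupp

variable {n : ℕ}

lemma xExp_apply (m : (Fin n ⊕ Fin n) →₀ ℕ) (j : Fin n) : xExp n m j = m (Sum.inl j) := rfl
lemma pExp_apply (m : (Fin n ⊕ Fin n) →₀ ℕ) (j : Fin n) : pExp n m j = m (Sum.inr j) := rfl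

lemma xExp_add (m m' : (Fin n ⊕ Fin n) →₀ ℕ) : xExp n (m + m') = xExp n m + xExp n m' := by
  ext j; simp [xExp_apply]

lemma pExp_add (m m' : (Fin n ⊕ Fin n) →₀ ℕ) : pExp n (m + m') = pExp n m + pExp n m' := by
  ext j; simp [pExp_apply]

lemma xExp_single_inl (j : Fin n) (k : ℕ) : xExp n (Finsupp.single (Sum.inl j) k) = Finsupp.single j k := by
  ext a; simp [xExp_apply, Finsupp.single_apply, Sum.inl.injEq]

lemma xExp_single_inr (j : Fin n) (k : ℕ) : xExp n (Finsupp.single (Sum.inr j) k) = 0 := by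
  ext a; simp [xExp_apply, Finsupp.single_apply]

lemma pExp_single_inr (j : Fin n) (k : ℕ) : pExp n (Finsupp.single (Sum.inr j) k) = Finsupp.single j k := by
  ext a; simp [pExp_apply, Finsupp.single_apply, Sum.inr.injEq]

lemma pExp_single_inl (j : Fin n) (k : ℕ) : pExp n (Finsupp.single (Sum.inl j) k) = 0 := by
  ext a; simp [pExp_apply, Finsupp.single_apply]

lemma xExp_sub (m m' : (Fin n ⊕ Fin n) →₀ ℕ) : xExp n (m - m') = xExp n m - xExp n m' := by
  ext j; simp [xExp_apply, Finsupp.tsub_apply]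

lemma pExp_sub (m m' : (Fin n ⊕ Fin n) →₀ ℕ) : pExp n (m - m') = pExp n m - pExp n m' := by
  ext j; simp [pExp_apply, Finsupp.tsub_apply]

/-- the coefficient factor in `derivMulti`. -/
noncomputable def dCoef (b c : Fin n →₀ ℕ) : ℝ := ∏ i, (Nat.descFactorial (c i) (b i) : ℝ)

lemma derivMulti_def' (b : Fin n →₀ ℕ) (f : PolyDen n) :
    derivMulti n b f = ∑ c ∈ f.support, (f.coeff c * dCoef b c) • monomial (c - b) 1 := rfl

lemma derivMulti_eq_sum_subset (b : Fin n →₀ ℕ) {f : PolyDen n} {S : Finset (Fin n →₀ ℕ)}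
    (h : f.support ⊆ S) :
    derivMulti n b f = ∑ c ∈ S, (f.coeff c * dCoef b c) • monomial (c - b) 1 := by
  rw [derivMulti_def']
  refine Finset.sum_subset h (fun c _ hc => ?_)
  rw [MvPolynomial.notMem_support_iff.mp hc]
  simp

lemma derivMulti_add (b : Fin n →₀ ℕ) (f g : PolyDen n) :
    derivMulti n b (f + g) = derivMulti n b f + derivMulti n b g := by
  rw [derivMulti_eq_sum_subset b (f := f + g) (S := f.support ∪ g.support)
      (by classical exact MvPolynomial.support_add),
    derivMulti_eq_sum_subset b (f := f) (S := f.support ∪ g.support) Finset.subset_union_left,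
    derivMulti_eq_sum_subset b (f := g) (S := f.support ∪ g.support) Finset.subset_union_right,
    ← Finset.sum_add_distrib]
  refine Finset.sum_congr rfl fun c _ => ?_
  rw [MvPolynomial.coeff_add, add_mul, add_smul]

lemma derivMulti_smul (b : Fin n →₀ ℕ) (r : ℝ) (f : PolyDen n) :
    derivMulti n b (r • f) = r • derivMulti n b f := by
  rw [derivMulti_eq_sum_subset b (f := r • f) (S := f.support)
      (MvPolynomial.support_smul), derivMulti_def', Finset.smul_sum]
  refine Finset.sum_congr rfl fun c _ => ?_
  rw [MvPolynomial.coeff_smul, smul_eq_mul, mul_assoc, smul_smul]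

lemma derivMulti_monomial (b c : Fin n →₀ ℕ) (r : ℝ) :
    derivMulti n b (monomial c r) = (r * dCoef b c) • monomial (c - b) 1 := by
  rcases eq_or_ne r 0 with rfl | hr
  · simp [derivMulti_def', MvPolynomial.support_monomial]
  · rw [derivMulti_def', MvPolynomial.support_monomial, if_neg hr, Finset.sum_singleton,
      MvPolynomial.coeff_monomial, if_pos rfl]

lemma derivMulti_zero (f : PolyDen n) : derivMulti n 0 f = f := by
  have : ∀ c r, derivMulti n (0 : Fin n →₀ ℕ) (monomial c r) = monomial c r := by
    intro c r
    rw [derivMulti_monomial]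
    simp [dCoef, MvPolynomial.smul_monomial]
  induction f using MvPolynomial.induction_on' with
  | monomial c r => exact this c r
  | add p q hp hq => rw [derivMulti_add, hp, hq]

end Aux
namespace Aux

variable {n : ℕ}

lemma descFactorial_succ_left (m k : ℕ) :
    Nat.descFactorial m (k + 1) = m * Nat.descFactorial (m - 1) k := by
  cases m with
  | zero => simp
  | succ m => rw [Nat.succ_descFactorial_succ]; simp

lemma dCoef_add_single (b c : Fin n →₀ ℕ) (j : Fin n) :
    dCoef (b + Finsupp.single j 1) c = ((c j - b j : ℕ) : ℝ) * dCoef b c := by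
  unfold dCoef
  have h : ∀ i : Fin n,
      (Nat.descFactorial (c i) ((b + Finsupp.single j 1 : Fin n →₀ ℕ) i) : ℝ)
        = (if i = j then ((c j - b j : ℕ) : ℝ) else 1) * (Nat.descFactorial (c i) (b i) : ℝ) := by
    intro i
    rcases eq_or_ne i j with rfl | hij
    · rw [if_pos rfl, Finsupp.add_apply, Finsupp.single_eq_same, Nat.descFactorial_succ]
      push_cast; ring
    · rw [if_neg hij, Finsupp.add_apply, Finsupp.single_eq_of_ne' (Ne.symm hij), one_mul, add_zero]
  rw [Finset.prod_congr rfl (fun i _ => h i), Finset.prod_mul_distrib,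
    Finset.prod_ite_eq' Finset.univ j, if_pos (Finset.mem_univ j)]

lemma dCoef_sub_single (b c : Fin n →₀ ℕ) (j : Fin n) :
    ((c j : ℕ) : ℝ) * dCoef b (c - Finsupp.single j 1) = dCoef (b + Finsupp.single j 1) c := by
  unfold dCoef
  have h : ∀ i : Fin n,
      (Nat.descFactorial ((c - Finsupp.single j 1 : Fin n →₀ ℕ) i) (b i) : ℝ)
        = if i = j then (Nat.descFactorial (c j - 1) (b j) : ℝ)
          else (Nat.descFactorial (c i) (b i) : ℝ) := by
    intro i
    rcases eq_or_ne i j with rfl | hij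
    · rw [if_pos rfl, Finsupp.tsub_apply, Finsupp.single_eq_same]
    · rw [if_neg hij, Finsupp.tsub_apply, Finsupp.single_eq_of_ne' (Ne.symm hij), Nat.sub_zero]
  have h2 : ∀ i : Fin n,
      (Nat.descFactorial (c i) ((b + Finsupp.single j 1 : Fin n →₀ ℕ) i) : ℝ)
        = (if i = j then ((c j : ℕ) : ℝ) else 1)
          * if i = j then (Nat.descFactorial (c j - 1) (b j) : ℝ)
            else (Nat.descFactorial (c i) (b i) : ℝ) := by
    intro i
    rcases eq_or_ne i j with rfl | hij
    · rw [if_pos rfl, if_pos rfl, Finsupp.add_apply, Finsupp.single_eq_same,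
        descFactorial_succ_left]
      push_cast; ring
    · rw [if_neg hij, if_neg hij, Finsupp.add_apply, Finsupp.single_eq_of_ne' (Ne.symm hij),
        one_mul, add_zero]
  rw [Finset.prod_congr rfl (fun i _ => h i), Finset.prod_congr rfl (fun i _ => h2 i),
    Finset.prod_mul_distrib, Finset.prod_ite_eq' Finset.univ j, if_pos (Finset.mem_univ j)]

lemma sub_add_single (b c : Fin n →₀ ℕ) (j : Fin n) :
    c - (b + Finsupp.single j 1) = c - b - Finsupp.single j 1 := by
  rw [tsub_add_eq_tsub_tsub]

/-- `∂^{b+e_j} = ∂_j ∘ ∂^b`. -/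
lemma derivMulti_add_single (b : Fin n →₀ ℕ) (j : Fin n) (f : PolyDen n) :
    derivMulti n (b + Finsupp.single j 1) f = pderiv j (derivMulti n b f) := by
  induction f using MvPolynomial.induction_on' with
  | add p q hp hq => rw [derivMulti_add, derivMulti_add, hp, hq, map_add]
  | monomial c r =>
    rw [derivMulti_monomial, derivMulti_monomial, Derivation.map_smul, pderiv_monomial,
      dCoef_add_single, sub_add_single]
    rw [show monomial (c - b - Finsupp.single j 1) ((1 : ℝ) * ((c - b) j))
        = (((c - b) j : ℕ) : ℝ) • monomial (c - b - Finsupp.single j 1) (1 : ℝ) by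
      rw [MvPolynomial.smul_monomial, smul_eq_mul, mul_one, one_mul]]
    rw [smul_smul, Finsupp.tsub_apply]
    ring_nf

/-- `∂^b ∘ ∂_j = ∂^{b+e_j}`. -/
lemma derivMulti_pderiv (b : Fin n →₀ ℕ) (j : Fin n) (f : PolyDen n) :
    derivMulti n b (pderiv j f) = derivMulti n (b + Finsupp.single j 1) f := by
  induction f using MvPolynomial.induction_on' with
  | add p q hp hq => rw [map_add, derivMulti_add, derivMulti_add, hp, hq]
  | monomial c r =>
    rw [pderiv_monomial, derivMulti_monomial, derivMulti_monomial, sub_add_single,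
      ← dCoef_sub_single b c j]
    rw [show c - Finsupp.single j 1 - b = c - b - Finsupp.single j 1 by
      rw [tsub_right_comm]]
    rw [mul_assoc]

lemma single_add_induction {P : (Fin n →₀ ℕ) → Prop} (h0 : P 0)
    (hs : ∀ (b : Fin n →₀ ℕ) (j : Fin n), P b → P (b + Finsupp.single j 1)) :
    ∀ b, P b := by
  intro b
  induction b using Finsupp.induction with
  | zero => exact h0
  | single_add a k f _ _ ih =>
    have key : ∀ m : ℕ, P (Finsupp.single a m + f) := by
      intro m
      induction m with
      | zero => simpa using ih
      | succ m ihm =>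
        have : Finsupp.single a (m + 1) + f
            = (Finsupp.single a m + f) + Finsupp.single a 1 := by
          rw [Finsupp.single_add]; abel
        rw [this]; exact hs _ a ihm
    exact key k

/-- Leibniz: `∂^b (x_j f) = x_j ∂^b f + b_j ∂^{b-e_j} f`. -/
lemma derivMulti_X_mul (b : Fin n →₀ ℕ) (j : Fin n) (f : PolyDen n) :
    derivMulti n b (X j * f)
      = X j * derivMulti n b f + (b j : ℝ) • derivMulti n (b - Finsupp.single j 1) f := by
  induction b using single_add_induction generalizing f with
  | h0 => simp [derivMulti_zero]
  | hs b k ih =>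
    rw [derivMulti_add_single, ih, map_add, Derivation.map_smul, pderiv_mul,
      ← derivMulti_add_single, ← derivMulti_add_single]
    rcases eq_or_ne k j with rfl | hkj
    · rw [pderiv_X_self, one_mul]
      rcases Nat.eq_zero_or_pos (b k) with hb | hb
      · have h1 : b - Finsupp.single k 1 = b := by
          ext i
          rcases eq_or_ne i k with rfl | hik
          · simp [Finsupp.single_apply, hb]
          · simp [Finsupp.single_apply, Ne.symm hik]
        have h2 : b + Finsupp.single k 1 - Finsupp.single k 1 = b := add_tsub_cancel_right _ _
        have h3 : ((b + Finsupp.single k 1 : Fin n →₀ ℕ)) k = 1 := by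
          simp [Finsupp.add_apply, hb]
        rw [h1, h2, h3, hb]
        push_cast
        rw [zero_smul, add_zero, one_smul, add_comm]
      · have h2 : b + Finsupp.single k 1 - Finsupp.single k 1 = b := add_tsub_cancel_right _ _
        have h3 : b - Finsupp.single k 1 + Finsupp.single k 1 = b :=
          tsub_add_cancel_of_le (Finsupp.single_le_iff.mpr hb)
        have h4 : ((b + Finsupp.single k 1 : Fin n →₀ ℕ)) k = b k + 1 := by
          simp [Finsupp.add_apply]
        rw [h2, h3, h4]
        push_cast
        rw [add_smul, one_smul]
        abel
    · rw [pderiv_X_of_ne (Ne.symm hkj), zero_mul, zero_add]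
      have h4 : b - Finsupp.single j 1 + Finsupp.single k 1
          = b + Finsupp.single k 1 - Finsupp.single j 1 := by
        ext i
        simp only [Finsupp.add_apply, Finsupp.tsub_apply, Finsupp.single_apply]
        rcases eq_or_ne j i with rfl | hji
        · rw [if_neg hkj]
          omega
        · rw [if_neg hji]
          omega
      have h5 : ((b + Finsupp.single k 1 : Fin n →₀ ℕ)) j = b j := by
        simp [Finsupp.add_apply, Finsupp.single_apply, hkj]
      rw [h4, h5]

end Aux
namespace Aux

variable {n : ℕ}

lemma X_eq_monomial {σ : Type*} (j : σ) :
    (X j : MvPolynomial σ ℝ) = monomial (Finsupp.single j 1) 1 := rfl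

lemma Nord_def' (P : PolySym n) (f : PolyDen n) :
    Nord n P f
      = ∑ m ∈ P.support, P.coeff m • (monomial (xExp n m) 1 * derivMulti n (pExp n m) f) := rfl

lemma Nord_eq_sum_subset {P : PolySym n} (f : PolyDen n) {S : Finset ((Fin n ⊕ Fin n) →₀ ℕ)}
    (h : P.support ⊆ S) :
    Nord n P f = ∑ m ∈ S, P.coeff m • (monomial (xExp n m) 1 * derivMulti n (pExp n m) f) := by
  rw [Nord_def']
  refine Finset.sum_subset h (fun m _ hm => ?_)
  rw [MvPolynomial.notMem_support_iff.mp hm, zero_smul]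

lemma Nord_add_left (P Q : PolySym n) (f : PolyDen n) :
    Nord n (P + Q) f = Nord n P f + Nord n Q f := by
  classical
  rw [Nord_eq_sum_subset f (S := P.support ∪ Q.support) MvPolynomial.support_add,
    Nord_eq_sum_subset f (P := P) (S := P.support ∪ Q.support) Finset.subset_union_left,
    Nord_eq_sum_subset f (P := Q) (S := P.support ∪ Q.support) Finset.subset_union_right,
    ← Finset.sum_add_distrib]
  exact Finset.sum_congr rfl fun m _ => by rw [MvPolynomial.coeff_add, add_smul]

lemma Nord_smul_left (r : ℝ) (P : PolySym n) (f : PolyDen n) :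
    Nord n (r • P) f = r • Nord n P f := by
  rw [Nord_eq_sum_subset f (S := P.support) MvPolynomial.support_smul, Nord_def',
    Finset.smul_sum]
  exact Finset.sum_congr rfl fun m _ => by rw [MvPolynomial.coeff_smul, smul_smul, smul_eq_mul]

lemma Nord_monomial (m : (Fin n ⊕ Fin n) →₀ ℕ) (c : ℝ) (f : PolyDen n) :
    Nord n (monomial m c) f = c • (monomial (xExp n m) 1 * derivMulti n (pExp n m) f) := by
  rcases eq_or_ne c 0 with rfl | hc
  · simp [Nord_def', MvPolynomial.support_monomial]
  · rw [Nord_def', MvPolynomial.support_monomial, if_neg hc, Finset.sum_singleton,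
      MvPolynomial.coeff_monomial, if_pos rfl]

lemma Nord_add_right (P : PolySym n) (f g : PolyDen n) :
    Nord n P (f + g) = Nord n P f + Nord n P g := by
  rw [Nord_def', Nord_def', Nord_def', ← Finset.sum_add_distrib]
  exact Finset.sum_congr rfl fun m _ => by
    rw [derivMulti_add, mul_add, smul_add]

lemma Nord_smul_right (P : PolySym n) (r : ℝ) (f : PolyDen n) :
    Nord n P (r • f) = r • Nord n P f := by
  rw [Nord_def', Nord_def', Finset.smul_sum]
  exact Finset.sum_congr rfl fun m _ => by
    rw [derivMulti_smul, mul_smul_comm, smul_comm]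

/-- (A) multiplication by `x_j` inside `N`. -/
lemma Nord_xVar_mul (j : Fin n) (P : PolySym n) (f : PolyDen n) :
    Nord n (xVar n j * P) f = X j * Nord n P f := by
  induction P using MvPolynomial.induction_on' with
  | add p q hp hq => rw [mul_add, Nord_add_left, Nord_add_left, hp, hq, mul_add]
  | monomial m c =>
    rw [xVar, X_eq_monomial, monomial_mul, one_mul, Nord_monomial, Nord_monomial,
      xExp_add, pExp_add, xExp_single_inl, pExp_single_inl, zero_add,
      mul_smul_comm, ← mul_assoc, X_eq_monomial, monomial_mul, mul_one]

/-- (B) multiplication by `p_j` inside `N`. -/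
lemma Nord_pVar_mul (j : Fin n) (P : PolySym n) (f : PolyDen n) :
    Nord n (pVar n j * P) f = Nord n P (pderiv j f) := by
  induction P using MvPolynomial.induction_on' with
  | add p q hp hq => rw [mul_add, Nord_add_left, Nord_add_left, hp, hq]
  | monomial m c =>
    rw [pVar, X_eq_monomial, monomial_mul, one_mul, Nord_monomial, Nord_monomial,
      xExp_add, pExp_add, xExp_single_inr, pExp_single_inr, zero_add,
      derivMulti_pderiv, add_comm (pExp n m)]

/-- (C) `∂_{x_j}` of `N P f`. -/
lemma pderiv_Nord (j : Fin n) (P : PolySym n) (f : PolyDen n) :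
    pderiv j (Nord n P f)
      = Nord n (pderiv (Sum.inl j) P) f + Nord n P (pderiv j f) := by
  induction P using MvPolynomial.induction_on' with
  | add p q hp hq =>
    rw [Nord_add_left, map_add, hp, hq, map_add, Nord_add_left, Nord_add_left]
    abel
  | monomial m c =>
    rw [Nord_monomial, Derivation.map_smul, pderiv_mul, pderiv_monomial, one_mul,
      pderiv_monomial, Nord_monomial, Nord_monomial,
      xExp_sub, pExp_sub, xExp_single_inl, pExp_single_inl, tsub_zero,
      ← derivMulti_add_single, derivMulti_pderiv, smul_add]
    congr 1
    rw [show monomial (xExp n m - Finsupp.single j 1) ((xExp n m j : ℕ) : ℝ)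
        = ((xExp n m j : ℕ) : ℝ) • monomial (xExp n m - Finsupp.single j 1) (1:ℝ) by
      rw [MvPolynomial.smul_monomial, smul_eq_mul, mul_one]]
    rw [smul_mul_assoc, smul_smul, show (m (Sum.inl j)) = xExp n m j from rfl, mul_comm]

/-- (D) `N P (x_j f)`. -/
lemma Nord_X_mul_right (j : Fin n) (P : PolySym n) (f : PolyDen n) :
    Nord n P (X j * f) = X j * Nord n P f + Nord n (pderiv (Sum.inr j) P) f := by
  induction P using MvPolynomial.induction_on' with
  | add p q hp hq =>
    rw [Nord_add_left, hp, hq, map_add, Nord_add_left, Nord_add_left, mul_add]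
    abel
  | monomial m c =>
    rw [Nord_monomial, derivMulti_X_mul, pderiv_monomial, Nord_monomial, Nord_monomial,
      xExp_sub, pExp_sub, xExp_single_inr, pExp_single_inr, tsub_zero]
    rw [show monomial (xExp n m) ((1:ℝ)) * (X j * derivMulti n (pExp n m) f
          + ((pExp n m) j : ℝ) • derivMulti n (pExp n m - Finsupp.single j 1) f)
        = X j * (monomial (xExp n m) 1 * derivMulti n (pExp n m) f)
          + ((pExp n m) j : ℝ) • (monomial (xExp n m) 1
              * derivMulti n (pExp n m - Finsupp.single j 1) f) by
      rw [mul_add, mul_smul_comm]; ring_nf]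
    rw [smul_add, smul_smul, ← pExp_apply, mul_smul_comm]

/-- (A2) multiplication by any `x`-polynomial inside `N`. -/
lemma Nord_liftX_mul (g : PolyDen n) (P : PolySym n) (f : PolyDen n) :
    Nord n (liftX n g * P) f = g * Nord n P f := by
  induction g using MvPolynomial.induction_on with
  | C r =>
    rw [show liftX n (C r) = (C r : PolySym n) by rw [liftX, rename_C],
      MvPolynomial.C_mul', MvPolynomial.C_mul', Nord_smul_left]
  | add p q hp hq =>
    rw [show liftX n (p + q) = liftX n p + liftX n q from map_add _ _ _, add_mul,
      Nord_add_left, hp, hq, add_mul]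
  | mul_X p j hp =>
    rw [show liftX n (p * X j) = xVar n j * liftX n p by
        rw [liftX, liftX, map_mul, rename_X, xVar, mul_comm],
      mul_assoc, Nord_xVar_mul, hp]
    ring

end Aux
namespace Aux

variable {n : ℕ}

lemma Nord_sum_left {α : Type*} (s : Finset α) (Q : α → PolySym n) (f : PolyDen n) :
    Nord n (∑ a ∈ s, Q a) f = ∑ a ∈ s, Nord n (Q a) f := by
  classical
  induction s using Finset.induction_on with
  | empty => simp [show Nord n 0 f = 0 by simpa using Nord_smul_left 0 0 f]
  | insert _ _ h ih => rw [Finset.sum_insert h, Finset.sum_insert h, Nord_add_left, ih]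

lemma Nord_zero_left (f : PolyDen n) : Nord n 0 f = 0 := by
  simpa using Nord_smul_left 0 0 f

lemma Nord_zero_right (P : PolySym n) : Nord n P 0 = 0 := by
  simpa using Nord_smul_right P 0 0

lemma Nord_sum_right {α : Type*} (s : Finset α) (P : PolySym n) (g : α → PolyDen n) :
    Nord n P (∑ a ∈ s, g a) = ∑ a ∈ s, Nord n P (g a) := by
  classical
  induction s using Finset.induction_on with
  | empty => simp [Nord_zero_right]
  | insert _ _ h ih => rw [Finset.sum_insert h, Finset.sum_insert h, Nord_add_right, ih]

lemma Nord_sub_left (P Q : PolySym n) (f : PolyDen n) :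
    Nord n (P - Q) f = Nord n P f - Nord n Q f := by
  have := Nord_add_left (P - Q) Q f
  rw [sub_add_cancel] at this
  rw [this]; abel

lemma Nord_sub_right (P : PolySym n) (f g : PolyDen n) :
    Nord n P (f - g) = Nord n P f - Nord n P g := by
  have := Nord_add_right P (f - g) g
  rw [sub_add_cancel] at this
  rw [this]; abel

/-- second-order version of (D). -/
lemma Nord_X_mul_mul_right (a b : Fin n) (P : PolySym n) (f : PolyDen n) :
    Nord n P (X a * (X b * f))
      = X a * (X b * Nord n P f) + X a * Nord n (pderiv (Sum.inr b) P) f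
        + X b * Nord n (pderiv (Sum.inr a) P) f
        + Nord n (pderiv (Sum.inr b) (pderiv (Sum.inr a) P)) f := by
  rw [Nord_X_mul_right, Nord_X_mul_right, Nord_X_mul_right, mul_add]
  abel

lemma ellOp_apply (lam : ℝ) (Xf : PolyVF n) (g : PolyDen n) :
    ellOp n lam Xf g = (∑ k, Xf k * pderiv k g) + lam • (divVF n Xf * g) := by
  simp [ellOp, LinearMap.mulLeft_apply]

lemma Lop_apply (δ : ℝ) (Xf : PolyVF n) (P : PolySym n) :
    Lop n δ Xf P = (∑ k, liftX n (Xf k) * pderiv (Sum.inl k) P)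
      - (∑ k, ∑ j, pVar n j * liftX n (pderiv k (Xf j)) * pderiv (Sum.inr k) P)
      + δ • (liftX n (divVF n Xf) * P) := by
  simp [Lop, mulOp, dxOp, dpOp, LinearMap.mulLeft_apply, mul_assoc]

lemma traceOp_apply (ε : Fin n → ℝ) (P : PolySym n) :
    traceOp n ε P = ∑ m, ε m • pderiv (Sum.inr m) (pderiv (Sum.inr m) P) := by
  simp [traceOp, dpOp]

lemma eulerOp_apply (Q : PolySym n) :
    eulerOp n Q = ∑ m, pVar n m * pderiv (Sum.inr m) Q := by
  simp [eulerOp, mulOp, dpOp, LinearMap.mulLeft_apply]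

lemma pderiv_X_ite (k m : Fin n) :
    pderiv k (X m : PolyDen n) = if k = m then 1 else 0 := by
  rcases eq_or_ne k m with rfl | h
  · simp
  · simp [h, Ne.symm h]

lemma pderiv_r2 (ε : Fin n → ℝ) (k : Fin n) :
    pderiv k (∑ m, ε m • (X m * X m) : PolyDen n) = (2 * ε k) • X k := by
  rw [map_sum]
  rw [Finset.sum_eq_single k]
  · rw [Derivation.map_smul, pderiv_mul, pderiv_X_self, one_mul, mul_one, ← two_smul ℝ,
      smul_smul, mul_comm]
  · intro m _ hmk
    simp [pderiv_X_ite, Ne.symm hmk]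
  · intro h; exact absurd (Finset.mem_univ k) h

lemma pderiv_invVF (ε : Fin n → ℝ) (i k j : Fin n) :
    pderiv k (invVF n ε i j)
      = (if j = i then (2 * ε k) • X k else 0)
        - (2 * ε i) • ((if k = i then (X j : PolyDen n) else 0) + (if k = j then X i else 0)) := by
  rw [invVF, map_sub, apply_ite (⇑(pderiv k)), map_zero, pderiv_r2, Derivation.map_smul,
    pderiv_mul, pderiv_X_ite, pderiv_X_ite, ite_mul, mul_ite, one_mul, mul_one, zero_mul,
    mul_zero]

lemma divVF_invVF (ε : Fin n → ℝ) (i : Fin n) :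
    divVF n (invVF n ε i) = (-(2 * (n : ℝ) * ε i)) • X i := by
  rw [divVF, Finset.sum_congr rfl (fun j _ => pderiv_invVF ε i j j)]
  simp only [eq_self_iff_true, if_true]
  rw [Finset.sum_sub_distrib,
    Finset.sum_ite_eq' Finset.univ i (fun j => (2 * ε j) • (X j : PolyDen n)),
    if_pos (Finset.mem_univ i), ← Finset.smul_sum, Finset.sum_add_distrib,
    Finset.sum_ite_eq' Finset.univ i (fun j => (X j : PolyDen n)), if_pos (Finset.mem_univ i),
    Finset.sum_const, Finset.card_univ, Fintype.card_fin]
  module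

end Aux
namespace Aux

variable {n : ℕ}

lemma Nord_ite_right (P : PolySym n) (c : Prop) [Decidable c] (g : PolyDen n) :
    Nord n P (if c then g else 0) = if c then Nord n P g else 0 := by
  split <;> simp [Nord_zero_right]

lemma Nord_ite_left (c : Prop) [Decidable c] (Q : PolySym n) (f : PolyDen n) :
    Nord n (if c then Q else 0) f = if c then Nord n Q f else 0 := by
  split <;> simp [Nord_zero_left]

lemma liftX_smul (r : ℝ) (g : PolyDen n) : liftX n (r • g) = r • liftX n g := by
  simp [liftX]

lemma liftX_add (g h : PolyDen n) : liftX n (g + h) = liftX n g + liftX n h := by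
  simp [liftX]

lemma liftX_sub (g h : PolyDen n) : liftX n (g - h) = liftX n g - liftX n h := by
  simp [liftX]

lemma liftX_mul (g h : PolyDen n) : liftX n (g * h) = liftX n g * liftX n h := by
  simp [liftX]

lemma liftX_X (j : Fin n) : liftX n (X j) = xVar n j := by
  simp [liftX, xVar]

lemma liftX_sum {α : Type*} (s : Finset α) (g : α → PolyDen n) :
    liftX n (∑ a ∈ s, g a) = ∑ a ∈ s, liftX n (g a) := by
  simp [liftX]

lemma liftX_ite (c : Prop) [Decidable c] (g : PolyDen n) :
    liftX n (if c then g else 0) = if c then liftX n g else 0 := by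
  split <;> simp [liftX]

lemma liftX_invVF (ε : Fin n → ℝ) (i k : Fin n) :
    liftX n (invVF n ε i k)
      = (if k = i then ∑ m, ε m • (xVar n m * xVar n m) else 0)
        - (2 * ε i) • (xVar n i * xVar n k) := by
  simp only [invVF, liftX, xVar, map_sub, map_smul, map_mul, map_sum, map_zero,
    apply_ite (rename (Sum.inl : Fin n → Fin n ⊕ Fin n)), rename_X]

lemma liftX_divVF_invVF (ε : Fin n → ℝ) (i : Fin n) :
    liftX n (divVF n (invVF n ε i)) = (-(2 * (n : ℝ) * ε i)) • xVar n i := by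
  rw [divVF_invVF, liftX_smul, liftX_X]

lemma liftX_pderiv_invVF (ε : Fin n → ℝ) (i k j : Fin n) :
    liftX n (pderiv k (invVF n ε i j))
      = (if j = i then (2 * ε k) • xVar n k else 0)
        - (2 * ε i) • ((if k = i then xVar n j else 0) + (if k = j then xVar n i else 0)) := by
  rw [pderiv_invVF]
  simp only [liftX, xVar, map_sub, map_smul, map_add, map_zero,
    apply_ite (rename (Sum.inl : Fin n → Fin n ⊕ Fin n)), rename_X]

end Aux

open Aux in
set_option maxHeartbeats 2000000 in
/-- For the conformal inversion `X_i = x_jx^j∂_i - 2x_ix^j∂_j`, the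
difference between the adjoint action `𝓛^{λ,μ}_{X_i}` on differential operators (pulled back
by normal ordering) and the symbol action `L^δ_{X_i}` equals `-p_i T + 2(E + nλ)∂_{p^i}`,
where `∂_{p^i} = η_{ij}∂_{p_j}` and `δ = μ - λ`: for every symbol `P` and function `f`,
`N(L^δ_{X_i} P + (-p_i T + 2(E + nλ)∂_{p^i}) P) f = ℓ^μ_{X_i}(N P f) - N P (ℓ^λ_{X_i} f)`. -/
theorem conformal_adjoint_minus_symbol_action (n : ℕ) (ε : Fin n → ℝ) (hε : ∀ i, ε i = 1 ∨ ε i = -1)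
    (i : Fin n) (lam δ : ℝ) (P : PolySym n) (f : PolyDen n) :
    Nord n (Lop n δ (invVF n ε i) P
        + (-(pVar n i * traceOp n ε P)
          + (2 : ℝ) • (eulerOp n (ε i • dpOp n i P) + ((n : ℝ) * lam) • (ε i • dpOp n i P)))) f
      = ellOp n (lam + δ) (invVF n ε i) (Nord n P f)
        - Nord n P (ellOp n lam (invVF n ε i) f) := by
  rw [ellOp_apply, ellOp_apply, divVF_invVF]
  simp only [pderiv_Nord, invVF, smul_mul_assoc, sub_mul, ite_mul, zero_mul,
    Finset.sum_mul, mul_assoc]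
  simp only [Nord_sum_right, Nord_add_right, Nord_sub_right, Nord_smul_right, Nord_ite_right,
    Nord_X_mul_mul_right, Nord_X_mul_right]
  simp only [← Nord_pVar_mul, ← Nord_xVar_mul, ← Nord_smul_left, ← Nord_ite_left,
    ← Nord_sum_left, ← Nord_add_left, ← Nord_sub_left]
  congr 1
  simp only [Lop_apply, traceOp_apply, eulerOp_apply, liftX_invVF, liftX_pderiv_invVF,
    liftX_divVF_invVF, dpOp, LinearMap.coe_mk, Derivation.coeFn_coe, Derivation.map_smul]
  simp only [smul_smul, smul_add, smul_sub, mul_add, add_mul, mul_sub, sub_mul,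
    smul_mul_assoc, mul_smul_comm, ite_mul, mul_ite, zero_mul, mul_zero, ite_smul, smul_ite,
    smul_zero, zero_smul, Finset.sum_mul, Finset.mul_sum, Finset.smul_sum,
    Finset.sum_add_distrib, Finset.sum_sub_distrib, Finset.sum_ite_irrel, Finset.sum_const_zero,
    Finset.sum_ite_eq, Finset.sum_ite_eq', Finset.mem_univ, if_true]
  simp only [MvPolynomial.smul_eq_C_mul]
  simp only [map_mul, map_neg, map_ofNat, map_add, map_sub]
  ring_nf
  simp only [Finset.sum_mul]
  ring_nf
  rw [show (∑ x : Fin n, MvPolynomial.C (ε i) * xVar n i * xVar n x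
        * (MvPolynomial.pderiv (Sum.inl x)) P * 2)
      = ∑ x : Fin n, MvPolynomial.C (ε i) * xVar n i * 2 * xVar n x
        * (MvPolynomial.pderiv (Sum.inl x)) P from
      Finset.sum_congr rfl fun x _ => by ring]
  rw [show (∑ x : Fin n, MvPolynomial.C (ε i) * (MvPolynomial.pderiv (Sum.inr i)) P
          * pVar n x * xVar n x * 2)
      = ∑ x : Fin n, MvPolynomial.C (ε i) * (MvPolynomial.pderiv (Sum.inr i)) P
          * xVar n x * pVar n x * 2 from
      Finset.sum_congr rfl fun x _ => by ring]
  ring
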